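/- For every n ≥ 1, every ε > 0 and every infinite subset L ⊆ ℕ there exist a finite set F ⊆ L and scalars (a_i)_{i∈F} ⊆ [0,1] such that: F ∈ S_n and F is a maximal S_n-subset of L (i.e. F ∪ {m} ∉ S_n for every m ∈ L with m > max F); Σ_{i∈F} a_i = 1; and Σ_{i∈G} a_i < ε for every G ∈ S_{n−1}. In other words, Σ_{i∈F} a_i e_i is an (n, ε)-basic special convex combination supported on a maximal S_n-subset of L. -/

import Mathlib

open Finset

noncomputable section


/-- Minimum of a finite set of naturals (`0` for the empty set). -/
def fmin (E : Finset ℕ) : ℕ := sInf (E : Set ℕ)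

/-- Maximum of a finite set of naturals (`0` for the empty set). -/
def fmax (E : Finset ℕ) : ℕ := E.sup id

/-- The Schreier families `S_n`:  `S_0` consists of singletons and the empty set, and
`S_{n+1}` consists of unions `F_1 ∪ ⋯ ∪ F_k` of successive members of `S_n` with
`k ≤ min F_1` (equivalently, `k ≤ min (F_1 ∪ ⋯ ∪ F_k)`). -/
def Schreier : ℕ → Set (Finset ℕ)
  | 0 => {F | F.card ≤ 1}
  | n + 1 => {F | ∃ (k : ℕ) (G : Fin k → Finset ℕ),
      F = Finset.univ.biUnion G ∧
      (∀ i, G i ∈ Schreier n) ∧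
      (∀ i, (G i).Nonempty) ∧
      (∀ i j : Fin k, i < j → ∀ a ∈ G i, ∀ b ∈ G j, a < b) ∧
      (∀ a ∈ F, k ≤ a)}

lemma fmin_mem {E : Finset ℕ} (h : E.Nonempty) : fmin E ∈ E := by
  have := Nat.sInf_mem (s := (E : Set ℕ)) (by exact_mod_cast h.to_set)
  exact_mod_cast this

lemma fmin_le {E : Finset ℕ} {a : ℕ} (ha : a ∈ E) : fmin E ≤ a :=
  Nat.sInf_le (by exact_mod_cast ha)

lemma le_fmax {E : Finset ℕ} {a : ℕ} (ha : a ∈ E) : a ≤ fmax E :=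
  Finset.le_sup (f := id) ha

lemma fmax_mem {E : Finset ℕ} (h : E.Nonempty) : fmax E ∈ E := by
  obtain ⟨i, hi, hie⟩ := Finset.exists_mem_eq_sup E h id
  rw [fmax, hie]; exact hi

lemma schreier_hereditary : ∀ n : ℕ, ∀ E ∈ Schreier n, ∀ E' ⊆ E, E' ∈ Schreier n := by
  intro n
  induction n with
  | zero =>
    intro E hE E' hsub
    exact le_trans (Finset.card_le_card hsub) hE
  | succ n ih =>
    rintro E ⟨k, G, hcov, hmem, hne, hord, hk⟩ E' hsub
    classical
    set T : Finset (Fin k) := Finset.univ.filter (fun i => (G i ∩ E').Nonempty) with hT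
    refine ⟨T.card, fun j => G (T.orderIsoOfFin rfl j) ∩ E', ?_, ?_, ?_, ?_, ?_⟩
    · ext x
      simp only [Finset.mem_biUnion, Finset.mem_univ, true_and, Finset.mem_inter]
      constructor
      · intro hx
        have hxE : x ∈ E := hsub hx
        rw [hcov] at hxE
        obtain ⟨i, _, hxi⟩ := Finset.mem_biUnion.1 hxE
        have hiT : i ∈ T := by simp [hT]; exact ⟨x, by simp [hxi, hx]⟩
        exact ⟨(T.orderIsoOfFin rfl).symm ⟨i, hiT⟩, by simpa using ⟨by simpa using hxi, hx⟩⟩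
      · rintro ⟨j, hj, hx⟩; exact hx
    · intro j; exact ih _ (hmem _) _ (Finset.inter_subset_left)
    · intro j
      have : (T.orderIsoOfFin rfl j : Fin k) ∈ T := (T.orderIsoOfFin rfl j).2
      exact (Finset.mem_filter.1 this).2
    · intro i j hij a ha b hb
      refine hord _ _ ?_ a (Finset.mem_inter.1 ha).1 b (Finset.mem_inter.1 hb).1
      exact (T.orderIsoOfFin rfl).lt_iff_lt.2 hij
    · intro a ha
      exact le_trans (le_trans (Finset.card_filter_le _ _) (by simp)) (hk a (hsub ha))

lemma schreier_one_card {E : Finset ℕ} (h : E ∈ Schreier 1) (hne : E.Nonempty) :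
    E.card ≤ fmin E := by
  obtain ⟨k, G, hcov, hmem, hnonempty, hord, hk⟩ := h
  have hcard : E.card ≤ k := by
    calc E.card ≤ ∑ i : Fin k, (G i).card := by rw [hcov]; exact Finset.card_biUnion_le
    _ ≤ ∑ _i : Fin k, 1 := Finset.sum_le_sum (fun i _ => by
        have : G i ∈ Schreier 0 := hmem i
        simpa [Schreier] using this)
    _ = k := by simp
  exact le_trans hcard (hk _ (fmin_mem hne))

lemma schreier_one_of {E : Finset ℕ} (h : E.card ≤ fmin E) : E ∈ Schreier 1 := by
  classical
  refine ⟨E.card, fun j => {(E.orderIsoOfFin rfl j : ℕ)}, ?_, ?_, ?_, ?_, ?_⟩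
  · ext x
    simp only [Finset.mem_biUnion, Finset.mem_univ, true_and, Finset.mem_singleton]
    constructor
    · intro hx
      exact ⟨(E.orderIsoOfFin rfl).symm ⟨x, hx⟩, by simp⟩
    · rintro ⟨j, rfl⟩; exact (E.orderIsoOfFin rfl j).2
  · intro j; simp [Schreier]
  · intro j; exact Finset.singleton_nonempty _
  · intro i j hij a ha b hb
    rw [Finset.mem_singleton] at ha hb
    subst ha; subst hb
    exact_mod_cast (E.orderIsoOfFin rfl).lt_iff_lt.2 hij
  · intro a ha
    exact le_trans h (fmin_le ha)
lemma aux_base (ε : ℝ) (hε : 0 < ε) (L : Set ℕ) (hL : L.Infinite) :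
  ∃ (F : Finset ℕ) (a : ℕ → ℝ),
    ↑F ⊆ L ∧ F.Nonempty ∧ F ∈ Schreier 1 ∧
    (∀ x : ℕ, fmax F < x → insert x F ∉ Schreier 1) ∧
    (∀ i ∈ F, 0 ≤ a i ∧ a i ≤ 1) ∧ (∑ i ∈ F, a i) = 1 ∧
    (∀ G ∈ Schreier 0, (∑ i ∈ G ∩ F, a i) < ε) := by
  classical
  set N : ℕ := ⌈1/ε⌉₊ + 1 with hN
  -- pick p ∈ L with p > N
  have hL' : (L \ {x | x ≤ N}).Infinite := hL.diff (Set.finite_le_nat N)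
  obtain ⟨p, hp⟩ := hL'.nonempty
  have hpL : p ∈ L := hp.1
  have hpN : N < p := by simpa using hp.2
  have hp1 : 1 ≤ p := le_trans (by omega) hpN
  -- pick p-1 elements of L above p
  have hL'' : (L \ {x | x ≤ p}).Infinite := hL.diff (Set.finite_le_nat p)
  obtain ⟨t, htsub, htcard⟩ := hL''.exists_subset_card_eq (p - 1)
  set F : Finset ℕ := insert p t with hF
  have hpt : p ∉ t := fun h => by simpa using (htsub h).2
  have htgt : ∀ x ∈ t, p < x := fun x hx => by
    have := (htsub hx).2; simp at this; omega
  have hcard : F.card = p := by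
    rw [hF, Finset.card_insert_of_notMem hpt, htcard]; omega
  have hminF : fmin F = p := by
    have h1 : fmin F ≤ p := fmin_le (by simp [hF])
    have h2 : p ≤ fmin F := by
      have hm := fmin_mem (E := F) ⟨p, by simp [hF]⟩
      have hm2 : fmin F ∈ insert p t := by rw [← hF]; exact hm
      rcases Finset.mem_insert.1 hm2 with h | h
      · omega
      · exact le_of_lt (htgt _ h)
    omega
  have hFL : ↑F ⊆ L := by
    intro x hx
    rw [hF] at hx; simp at hx
    rcases hx with rfl | hx
    · exact hpL
    · exact (htsub hx).1
  have hpinv : (0:ℝ) < (p:ℝ)⁻¹ := by positivity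
  refine ⟨F, fun _ => (p:ℝ)⁻¹, hFL, ⟨p, by simp [hF]⟩, ?_, ?_, ?_, ?_, ?_⟩
  · exact schreier_one_of (by rw [hcard, hminF])
  · intro x hx hmem
    have hxF : x ∉ F := fun h => absurd (le_fmax h) (by omega)
    have hne : (insert x F).Nonempty := ⟨x, by simp⟩
    have hcard' : (insert x F).card = p + 1 := by
      rw [Finset.card_insert_of_notMem hxF, hcard]
    have hminx : fmin (insert x F) ≤ p := fmin_le (by simp [hF])
    have := schreier_one_card hmem hne
    omega
  · intro i _
    constructor
    · positivity
    · rw [inv_le_one_iff₀]; right; exact_mod_cast hp1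
  · rw [Finset.sum_const, hcard, nsmul_eq_mul]
    have : (p:ℝ) ≠ 0 := by positivity
    field_simp
  · intro G hG
    have hGcard : G.card ≤ 1 := by simpa [Schreier] using hG
    have hcard2 : (G ∩ F).card ≤ 1 := le_trans (Finset.card_le_card Finset.inter_subset_left) hGcard
    calc ∑ _i ∈ G ∩ F, (p:ℝ)⁻¹ = (G ∩ F).card * (p:ℝ)⁻¹ := by
          rw [Finset.sum_const, nsmul_eq_mul]
      _ ≤ 1 * (p:ℝ)⁻¹ := by
          apply mul_le_mul_of_nonneg_right _ (le_of_lt hpinv)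
          exact_mod_cast hcard2
      _ < ε := by
          rw [one_mul]
          have hp0 : (0:ℝ) < p := by exact_mod_cast hp1
          rw [inv_lt_comm₀ hp0 hε]
          calc ε⁻¹ = 1/ε := by ring
            _ ≤ (⌈1/ε⌉₊ : ℝ) := Nat.le_ceil _
            _ < p := by exact_mod_cast (by omega : ⌈1/ε⌉₊ < p)
/-- The inductive statement. -/
def SCC (n : ℕ) : Prop :=
  ∀ ε : ℝ, 0 < ε → ∀ L : Set ℕ, L.Infinite →
  ∃ (F : Finset ℕ) (a : ℕ → ℝ),
    ↑F ⊆ L ∧ F.Nonempty ∧ F ∈ Schreier (n+1) ∧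
    (∀ x : ℕ, fmax F < x → insert x F ∉ Schreier (n+1)) ∧
    (∀ i ∈ F, 0 ≤ a i ∧ a i ≤ 1) ∧ (∑ i ∈ F, a i) = 1 ∧
    (∀ G ∈ Schreier n, (∑ i ∈ G ∩ F, a i) < ε)

lemma aux_step (m : ℕ) (IH : SCC m) : SCC (m+1) := by
  classical
  intro ε hε L hL
  set N : ℕ := ⌈2/ε⌉₊ with hN
  have htail : ∀ t : ℕ, (L ∩ {x | t < x}).Infinite := by
    intro t
    have h1 : (L \ {x | x ≤ t}).Infinite := hL.diff (Set.finite_le_nat t)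
    have heq : L ∩ {x | t < x} = L \ {x | x ≤ t} := by
      ext x
      simp only [Set.mem_inter_iff, Set.mem_setOf_eq, Set.mem_diff]
      exact and_congr_right (fun _ => by omega)
    rw [heq]; exact h1
  have hepspos : ∀ (j t : ℕ), (0:ℝ) < ε / (2^(j+3) * (t+1)) := by
    intro j t; positivity
  -- the recursive choice of blocks
  have hex : ∀ (j t : ℕ), ∃ Fb : Finset ℕ × (ℕ → ℝ),
      ↑Fb.1 ⊆ L ∩ {x | t < x} ∧ Fb.1.Nonempty ∧ Fb.1 ∈ Schreier (m+1) ∧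
      (∀ x : ℕ, fmax Fb.1 < x → insert x Fb.1 ∉ Schreier (m+1)) ∧
      (∀ i ∈ Fb.1, 0 ≤ Fb.2 i ∧ Fb.2 i ≤ 1) ∧ (∑ i ∈ Fb.1, Fb.2 i) = 1 ∧
      (∀ G ∈ Schreier m, (∑ i ∈ G ∩ Fb.1, Fb.2 i) < ε / (2^(j+3) * (t+1))) := by
    intro j t
    obtain ⟨F, b, h⟩ := IH _ (hepspos j t) _ (htail t)
    exact ⟨⟨F, b⟩, h⟩
  set f : ℕ → Finset ℕ × (ℕ → ℝ) := fun j => Nat.rec ((hex 0 N).choose)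
    (fun j prev => (hex (j+1) (fmax prev.1)).choose) j with hf
  set FF : ℕ → Finset ℕ := fun j => (f j).1 with hFF
  set bb : ℕ → ℕ → ℝ := fun j => (f j).2 with hbb
  have hspec0 := (hex 0 N).choose_spec
  have hspecS : ∀ j : ℕ, ↑(FF (j+1)) ⊆ L ∩ {x | fmax (FF j) < x} ∧ (FF (j+1)).Nonempty ∧
      FF (j+1) ∈ Schreier (m+1) ∧
      (∀ x : ℕ, fmax (FF (j+1)) < x → insert x (FF (j+1)) ∉ Schreier (m+1)) ∧
      (∀ i ∈ FF (j+1), 0 ≤ bb (j+1) i ∧ bb (j+1) i ≤ 1) ∧ (∑ i ∈ FF (j+1), bb (j+1) i) = 1 ∧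
      (∀ G ∈ Schreier m, (∑ i ∈ G ∩ FF (j+1), bb (j+1) i) <
        ε / (2^(j+1+3) * (fmax (FF j)+1))) := by
    intro j
    exact (hex (j+1) (fmax (FF j))).choose_spec
  -- basic facts about the blocks
  have hneF : ∀ j, (FF j).Nonempty := by
    intro j; cases j with
    | zero => exact hspec0.2.1
    | succ j => exact (hspecS j).2.1
  have hsubL : ∀ j, ↑(FF j) ⊆ L := by
    intro j; cases j with
    | zero => exact fun x hx => (hspec0.1 hx).1
    | succ j => exact fun x hx => ((hspecS j).1 hx).1
  have hSch : ∀ j, FF j ∈ Schreier (m+1) := by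
    intro j; cases j with
    | zero => exact hspec0.2.2.1
    | succ j => exact (hspecS j).2.2.1
  have hmaxF : ∀ j, ∀ x : ℕ, fmax (FF j) < x → insert x (FF j) ∉ Schreier (m+1) := by
    intro j; cases j with
    | zero => exact hspec0.2.2.2.1
    | succ j => exact (hspecS j).2.2.2.1
  have hbb01 : ∀ j, ∀ i ∈ FF j, 0 ≤ bb j i ∧ bb j i ≤ 1 := by
    intro j; cases j with
    | zero => exact hspec0.2.2.2.2.1
    | succ j => exact (hspecS j).2.2.2.2.1
  have hsum1 : ∀ j, (∑ i ∈ FF j, bb j i) = 1 := by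
    intro j; cases j with
    | zero => exact hspec0.2.2.2.2.2.1
    | succ j => exact (hspecS j).2.2.2.2.2.1
  have hsmallS : ∀ j, ∀ G ∈ Schreier m, (∑ i ∈ G ∩ FF (j+1), bb (j+1) i) <
      ε / (2^(j+1+3) * (fmax (FF j)+1)) := fun j => (hspecS j).2.2.2.2.2.2
  have hgt0 : ∀ x ∈ FF 0, N < x := fun x hx => (hspec0.1 hx).2
  have hgtS : ∀ j, ∀ x ∈ FF (j+1), fmax (FF j) < x := fun j x hx => ((hspecS j).1 hx).2
  -- ordering between blocks
  have hlt : ∀ i j : ℕ, i < j → ∀ a ∈ FF i, ∀ b ∈ FF j, a < b := by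
    have key : ∀ i d : ℕ, ∀ b ∈ FF (i+d+1), fmax (FF i) < b := by
      intro i d
      induction d with
      | zero => exact fun b hb => hgtS i b hb
      | succ d ihd =>
        intro b hb
        have h1 : fmax (FF (i+d+1)) < b := hgtS (i+d+1) b hb
        have h2 : fmax (FF i) < fmax (FF (i+d+1)) := ihd _ (fmax_mem (hneF (i+d+1)))
        omega
    intro i j hij a ha b hb
    have h1 : a ≤ fmax (FF i) := le_fmax ha
    have h2 : fmax (FF i) < b := by
      have : j = i + (j - i - 1) + 1 := by omega
      exact key i (j-i-1) b (by rwa [← this])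
    omega
  have hfmax_mono : ∀ i j : ℕ, i ≤ j → fmax (FF i) ≤ fmax (FF j) := by
    intro i j hij
    rcases eq_or_lt_of_le hij with rfl | h
    · exact le_rfl
    · exact le_of_lt (lt_of_le_of_lt (le_refl _)
        (hlt i j h _ (fmax_mem (hneF i)) _ (fmax_mem (hneF j))))
  have hdisjN : ∀ i j : ℕ, i ≠ j → Disjoint (FF i) (FF j) := by
    intro i j hij
    rw [Finset.disjoint_left]
    intro x hxi hxj
    rcases lt_or_gt_of_ne hij with h | h
    · exact absurd (hlt i j h x hxi x hxj) (lt_irrefl x)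
    · exact absurd (hlt j i h x hxj x hxi) (lt_irrefl x)
  -- the set F and coefficients a
  set k : ℕ := fmin (FF 0) with hk
  have hkF0 : k ∈ FF 0 := fmin_mem (hneF 0)
  have hkN : N < k := hgt0 _ hkF0
  have hk1 : 1 ≤ k := by omega
  set F : Finset ℕ := (Finset.range k).biUnion FF with hFdef
  set a : ℕ → ℝ := fun i => (k:ℝ)⁻¹ * ∑ j ∈ Finset.range k, (if i ∈ FF j then bb j i else 0)
    with ha
  have hdisj : (↑(Finset.range k) : Set ℕ).PairwiseDisjoint FF := by
    intro i _ j _ hij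
    exact hdisjN i j hij
  have hk0R : (0:ℝ) < (k:ℝ) := by exact_mod_cast hk1
  have hkinv0 : (0:ℝ) ≤ (k:ℝ)⁻¹ := inv_nonneg.2 (le_of_lt hk0R)
  have ha_on : ∀ j ∈ Finset.range k, ∀ i ∈ FF j, a i = (k:ℝ)⁻¹ * bb j i := by
    intro j hj i hi
    show (k:ℝ)⁻¹ * (∑ j' ∈ Finset.range k, (if i ∈ FF j' then bb j' i else 0)) = (k:ℝ)⁻¹ * bb j i
    congr 1
    rw [Finset.sum_eq_single_of_mem j hj]
    · simp [hi]
    · intro j' _ hj'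
      have : i ∉ FF j' := fun h => (Finset.disjoint_left.1 (hdisjN j' j hj')) h hi
      simp [this]
  have hFmem : ∀ {i : ℕ}, i ∈ F → ∃ j ∈ Finset.range k, i ∈ FF j := by
    intro i hi
    rwa [hFdef, Finset.mem_biUnion] at hi
  -- the six main goals
  refine ⟨F, a, ?_, ?_, ?_, ?_, ?_, ?_, ?_⟩
  · intro i hi
    obtain ⟨j, _, hij⟩ := hFmem (by exact_mod_cast hi)
    exact hsubL j hij
  · exact ⟨k, by rw [hFdef]; exact Finset.mem_biUnion.2 ⟨0, Finset.mem_range.2 (by omega), hkF0⟩⟩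
  · -- F ∈ Schreier (m+2)
    refine ⟨k, fun j : Fin k => FF j, ?_, fun j => hSch j, fun j => hneF j, ?_, ?_⟩
    · ext x
      rw [hFdef]
      simp only [Finset.mem_biUnion, Finset.mem_range, Finset.mem_univ, true_and]
      exact ⟨fun ⟨j, hj, hx⟩ => ⟨⟨j, hj⟩, hx⟩, fun ⟨j, hx⟩ => ⟨j, j.2, hx⟩⟩
    · intro i j hij a' ha' b' hb'
      exact hlt i j hij a' ha' b' hb'
    · intro y hy
      obtain ⟨j, hj, hyj⟩ := hFmem hy
      rcases Nat.eq_zero_or_pos j with rfl | hj0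
      · exact fmin_le hyj
      · exact le_of_lt (hlt 0 j hj0 k hkF0 y hyj)
  · -- maximality
    intro x hx hmem
    obtain ⟨r, H, hHcov, hHmem, hHne, hHord, hHr⟩ := hmem
    have hFsubE : F ⊆ insert x F := Finset.subset_insert x F
    have hkE : k ∈ insert x F :=
      hFsubE (by rw [hFdef]; exact Finset.mem_biUnion.2 ⟨0, Finset.mem_range.2 (by omega), hkF0⟩)
    have hrk : r ≤ k := hHr k hkE
    have hloc : ∀ y ∈ insert x F, ∃ i : Fin r, y ∈ H i := by
      intro y hy
      rw [hHcov] at hy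
      obtain ⟨i, _, hi⟩ := Finset.mem_biUnion.1 hy
      exact ⟨i, hi⟩
    have hFFsubF : ∀ t : ℕ, t < k → FF t ⊆ F := by
      intro t ht
      rw [hFdef]
      exact Finset.subset_biUnion_of_mem FF (Finset.mem_range.2 ht)
    have claim : ∀ t : ℕ, ∀ ht : t < r, fmax (H ⟨t, ht⟩) ≤ fmax (FF t) := by
      intro t
      induction t using Nat.strong_induction_on with
      | _ t ihc =>
        intro ht
        by_contra hcon
        push_neg at hcon
        set xt := fmax (H ⟨t, ht⟩) with hxt
        have hxtH : xt ∈ H ⟨t, ht⟩ := fmax_mem (hHne _)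
        have hxtE : xt ∈ insert x F := by
          rw [hHcov]
          exact Finset.mem_biUnion.2 ⟨⟨t, ht⟩, Finset.mem_univ _, hxtH⟩
        set S := (insert x F).filter (fun y => fmax (FF t) < y) with hS
        have hSne : S.Nonempty := ⟨xt, Finset.mem_filter.2 ⟨hxtE, hcon⟩⟩
        set mt := fmin S with hmt
        have hmtS : mt ∈ insert x F ∧ fmax (FF t) < mt := Finset.mem_filter.1 (fmin_mem hSne)
        have hmtle : mt ≤ xt := fmin_le (Finset.mem_filter.2 ⟨hxtE, hcon⟩)
        -- mt ∈ H ⟨t, ht⟩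
        obtain ⟨i, hi⟩ := hloc mt hmtS.1
        have hit : i = ⟨t, ht⟩ := by
          rcases lt_trichotomy i ⟨t, ht⟩ with h | h | h
          · exfalso
            have h1 : mt ≤ fmax (H i) := le_fmax hi
            have h2 : fmax (H i) ≤ fmax (FF i.1) := by
              have := ihc i.1 h i.2
              rwa [Fin.eta] at this
            have h3 : fmax (FF i.1) ≤ fmax (FF t) := hfmax_mono _ _ (le_of_lt h)
            omega
          · exact h
          · exfalso
            have := hHord _ _ h xt hxtH mt hi
            omega
        rw [hit] at hi
        -- FF t ⊆ H ⟨t, ht⟩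
        have hsubH : ∀ y ∈ FF t, y ∈ H ⟨t, ht⟩ := by
          intro y hy
          have hyE : y ∈ insert x F := hFsubE (hFFsubF t (lt_of_lt_of_le ht hrk) hy)
          obtain ⟨i', hi'⟩ := hloc y hyE
          rcases lt_trichotomy i' ⟨t, ht⟩ with h | h | h
          · exfalso
            have h1 : y ≤ fmax (H i') := le_fmax hi'
            have h2 : fmax (H i') ≤ fmax (FF i'.1) := by
              have := ihc i'.1 h i'.2
              rwa [Fin.eta] at this
            have h3 : fmax (FF i'.1) < y := hlt i'.1 t h _ (fmax_mem (hneF i'.1)) y hy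
            omega
          · rwa [h] at hi'
          · exfalso
            have h1 := hHord _ _ h xt hxtH y hi'
            have h2 : y ≤ fmax (FF t) := le_fmax hy
            omega
        have hins : insert mt (FF t) ⊆ H ⟨t, ht⟩ :=
          Finset.insert_subset hi hsubH
        exact hmaxF t mt hmtS.2
          (schreier_hereditary _ _ (hHmem _) _ hins)
    obtain ⟨i, hi⟩ := hloc x (Finset.mem_insert_self x F)
    have h1 : x ≤ fmax (H i) := le_fmax hi
    have h2 : fmax (H i) ≤ fmax (FF i.1) := by
      have := claim i.1 i.2
      rwa [Fin.eta] at this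
    have h3 : fmax (FF i.1) ≤ fmax F :=
      Finset.sup_mono (hFFsubF i.1 (lt_of_lt_of_le i.2 hrk))
    omega
  · -- bounds on a
    intro i hi
    obtain ⟨j, hj, hij⟩ := hFmem hi
    rw [ha_on j hj i hij]
    obtain ⟨hb0, hb1⟩ := hbb01 j i hij
    constructor
    · exact mul_nonneg hkinv0 hb0
    · calc (k:ℝ)⁻¹ * bb j i ≤ (k:ℝ)⁻¹ * 1 :=
            mul_le_mul_of_nonneg_left hb1 hkinv0
        _ ≤ 1 := by
            rw [mul_one, inv_le_one_iff₀]; right; exact_mod_cast hk1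
  · -- total sum is 1
    rw [hFdef, Finset.sum_biUnion hdisj]
    have : ∀ j ∈ Finset.range k, (∑ i ∈ FF j, a i) = (k:ℝ)⁻¹ := by
      intro j hj
      rw [Finset.sum_congr rfl (fun i hi => ha_on j hj i hi), ← Finset.mul_sum, hsum1, mul_one]
    rw [Finset.sum_congr rfl this, Finset.sum_const, Finset.card_range, nsmul_eq_mul]
    exact mul_inv_cancel₀ (ne_of_gt hk0R)
  · -- the estimate
    intro G hG
    have hsplit : G ∩ F = (Finset.range k).biUnion (fun j => G ∩ FF j) := by
      rw [hFdef]
      ext y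
      simp only [Finset.mem_inter, Finset.mem_biUnion, Finset.mem_range]
      exact ⟨fun ⟨hyG, j, hj, hyF⟩ => ⟨j, hj, hyG, hyF⟩,
        fun ⟨j, hj, hyG, hyF⟩ => ⟨hyG, j, hj, hyF⟩⟩
    have hdisj' : (↑(Finset.range k) : Set ℕ).PairwiseDisjoint (fun j => G ∩ FF j) := by
      intro i _ j _ hij
      exact Finset.disjoint_of_subset_left Finset.inter_subset_right
        (Finset.disjoint_of_subset_right Finset.inter_subset_right (hdisjN i j hij))
    set s : ℕ → ℝ := fun j => ∑ i ∈ G ∩ FF j, bb j i with hs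
    have hstep : (∑ i ∈ G ∩ F, a i) = (k:ℝ)⁻¹ * ∑ j ∈ Finset.range k, s j := by
      rw [hsplit, Finset.sum_biUnion hdisj', Finset.mul_sum]
      refine Finset.sum_congr rfl ?_
      intro j hj
      rw [hs, Finset.mul_sum]
      refine Finset.sum_congr rfl ?_
      intro i hi
      exact ha_on j hj i (Finset.mem_inter.1 hi).2
    have hs_nonneg : ∀ j, 0 ≤ s j := by
      intro j
      refine Finset.sum_nonneg ?_
      intro i hi
      exact (hbb01 j i (Finset.mem_inter.1 hi).2).1
    rw [hstep]
    by_cases hall : ∀ j ∈ Finset.range k, G ∩ FF j = ∅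
    · have hzero : (∑ j ∈ Finset.range k, s j) = 0 := by
        refine Finset.sum_eq_zero ?_
        intro j hj
        show (∑ i ∈ G ∩ FF j, bb j i) = 0
        rw [hall j hj, Finset.sum_empty]
      rw [hzero, mul_zero]; exact hε
    · push_neg at hall
      set T : Finset ℕ := (Finset.range k).filter (fun j => (G ∩ FF j).Nonempty) with hT
      have hTne : T.Nonempty := by
        obtain ⟨j, hj, hne⟩ := hall
        exact ⟨j, Finset.mem_filter.2 ⟨hj, hne⟩⟩
      set j0 : ℕ := T.min' hTne with hj0
      have hj0T : j0 ∈ T := T.min'_mem hTne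
      have hj0k : j0 ∈ Finset.range k := (Finset.mem_filter.1 hj0T).1
      have hj0ne : (G ∩ FF j0).Nonempty := (Finset.mem_filter.1 hj0T).2
      -- decompose G
      obtain ⟨d, P, hPcov, hPmem, hPne, hPord, hPd⟩ := hG
      obtain ⟨w, hw⟩ := hj0ne
      have hwG : w ∈ G := (Finset.mem_inter.1 hw).1
      have hwF : w ∈ FF j0 := (Finset.mem_inter.1 hw).2
      have hd : d ≤ fmax (FF j0) := le_trans (hPd w hwG) (le_fmax hwF)
      -- block bound for j ≠ j0
      have hblock : ∀ j ∈ Finset.range k, j ≠ j0 → s j ≤ ε / 2^(j+3) := by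
        intro j hj hne0
        by_cases hemp : G ∩ FF j = ∅
        · have : s j = 0 := by
            show (∑ i ∈ G ∩ FF j, bb j i) = 0
            rw [hemp, Finset.sum_empty]
          rw [this]; positivity
        · have hjT : j ∈ T := Finset.mem_filter.2 ⟨hj, Finset.nonempty_iff_ne_empty.2 hemp⟩
          have hj0lt : j0 < j := lt_of_le_of_ne (T.min'_le j hjT) (Ne.symm hne0)
          obtain ⟨u, rfl⟩ : ∃ u, j = u + 1 := ⟨j - 1, by omega⟩
          have hGsplit : G ∩ FF (u+1) =
              Finset.univ.biUnion (fun i : Fin d => P i ∩ FF (u+1)) := by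
            ext y
            simp only [Finset.mem_inter, Finset.mem_biUnion, Finset.mem_univ, true_and]
            constructor
            · rintro ⟨hyG, hyF⟩
              rw [hPcov] at hyG
              obtain ⟨i, _, hyi⟩ := Finset.mem_biUnion.1 hyG
              exact ⟨i, hyi, hyF⟩
            · rintro ⟨i, hyi, hyF⟩
              refine ⟨?_, hyF⟩
              rw [hPcov]
              exact Finset.mem_biUnion.2 ⟨i, Finset.mem_univ _, hyi⟩
          have hdisjP : (↑(Finset.univ : Finset (Fin d)) : Set (Fin d)).PairwiseDisjoint
              (fun i => P i ∩ FF (u+1)) := by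
            intro i _ i' _ hii'
            have hdisjPP : Disjoint (P i) (P i') := by
              rw [Finset.disjoint_left]
              intro y hyi hyi'
              rcases lt_or_gt_of_ne hii' with h | h
              · exact absurd (hPord i i' h y hyi y hyi') (lt_irrefl y)
              · exact absurd (hPord i' i h y hyi' y hyi) (lt_irrefl y)
            exact Finset.disjoint_of_subset_left Finset.inter_subset_left
              (Finset.disjoint_of_subset_right Finset.inter_subset_left hdisjPP)
          set c : ℝ := (fmax (FF u) : ℝ) with hc
          have hc0 : (0:ℝ) ≤ c := by rw [hc]; exact_mod_cast Nat.zero_le _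
          set B : ℝ := ε / (2^(u+1+3) * (c+1)) with hB
          have hB0 : 0 ≤ B := by rw [hB]; positivity
          have hsj : s (u+1) = ∑ i : Fin d, ∑ y ∈ P i ∩ FF (u+1), bb (u+1) y := by
            show (∑ i ∈ G ∩ FF (u+1), bb (u+1) i) = _
            rw [hGsplit, Finset.sum_biUnion hdisjP]
          have hterm : ∀ i : Fin d, (∑ y ∈ P i ∩ FF (u+1), bb (u+1) y) ≤ B := by
            intro i
            have := hsmallS u (P i) (hPmem i)
            rw [hB, hc]
            exact le_of_lt this
          have hsum_le : s (u+1) ≤ (d:ℝ) * B := by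
            rw [hsj]
            calc (∑ i : Fin d, ∑ y ∈ P i ∩ FF (u+1), bb (u+1) y)
                ≤ ∑ _i : Fin d, B := Finset.sum_le_sum (fun i _ => hterm i)
              _ = (d:ℝ) * B := by rw [Finset.sum_const, Finset.card_univ,
                    Fintype.card_fin, nsmul_eq_mul]
          have hdc : (d:ℝ) ≤ c + 1 := by
            have h1 : d ≤ fmax (FF u) := le_trans hd (hfmax_mono j0 u (by omega))
            rw [hc]
            have : (d:ℝ) ≤ (fmax (FF u) : ℝ) := by exact_mod_cast h1
            linarith
          have hfinal : (d:ℝ) * B ≤ ε / 2^(u+1+3) := by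
            have h1 : (d:ℝ) * B ≤ (c+1) * B := mul_le_mul_of_nonneg_right hdc hB0
            have h2 : (c+1) * B = ε / 2^(u+1+3) := by
              rw [hB]
              have hc1 : c + 1 ≠ 0 := by positivity
              field_simp
            linarith
          linarith
      -- the j0 block
      have hsj0 : s j0 ≤ 1 := by
        show (∑ i ∈ G ∩ FF j0, bb j0 i) ≤ 1
        calc (∑ i ∈ G ∩ FF j0, bb j0 i) ≤ ∑ i ∈ FF j0, bb j0 i :=
              Finset.sum_le_sum_of_subset_of_nonneg Finset.inter_subset_right
                (fun i hi _ => (hbb01 j0 i hi).1)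
          _ = 1 := hsum1 j0
      -- total
      have hS_total : (∑ j ∈ Finset.range k, s j) ≤ 1 + ε/4 := by
        have hsplit2 : (∑ j ∈ Finset.range k, s j) =
            s j0 + ∑ j ∈ (Finset.range k).erase j0, s j :=
          (Finset.add_sum_erase _ s hj0k).symm
        have h2 : (∑ j ∈ (Finset.range k).erase j0, s j) ≤
            ∑ j ∈ (Finset.range k).erase j0, ε / 2^(j+3) :=
          Finset.sum_le_sum (fun j hj => hblock j (Finset.mem_of_mem_erase hj)
            (Finset.ne_of_mem_erase hj))
        have h3 : (∑ j ∈ (Finset.range k).erase j0, ε / 2^(j+3)) ≤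
            ∑ j ∈ Finset.range k, ε / 2^(j+3) :=
          Finset.sum_le_sum_of_subset_of_nonneg (Finset.erase_subset _ _)
            (fun j _ _ => by positivity)
        have h4 : (∑ j ∈ Finset.range k, ε / 2^(j+3)) ≤ ε/4 := by
          have heq : ∀ j ∈ Finset.range k, ε / 2^(j+3) = (ε/8) * (1/2)^j := by
            intro j _
            rw [pow_add]
            ring_nf
            simp only [one_div]
          rw [Finset.sum_congr rfl heq, ← Finset.mul_sum]
          calc (ε/8) * ∑ j ∈ Finset.range k, ((1:ℝ)/2)^j ≤ (ε/8) * 2 :=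
                mul_le_mul_of_nonneg_left (sum_geometric_two_le k) (by positivity)
            _ = ε/4 := by ring
        linarith
      have hkinv_lt : (k:ℝ)⁻¹ < ε/2 := by
        have h2e : 2/ε < (k:ℝ) := by
          calc 2/ε ≤ (⌈2/ε⌉₊ : ℝ) := Nat.le_ceil _
            _ < (k:ℝ) := by exact_mod_cast hkN
        rw [inv_lt_comm₀ hk0R (half_pos hε), inv_div]
        exact h2e
      have hkinv_le1 : (k:ℝ)⁻¹ ≤ 1 := by
        rw [inv_le_one_iff₀]; right; exact_mod_cast hk1
      calc (k:ℝ)⁻¹ * (∑ j ∈ Finset.range k, s j) ≤ (k:ℝ)⁻¹ * (1 + ε/4) :=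
            mul_le_mul_of_nonneg_left hS_total hkinv0
        _ = (k:ℝ)⁻¹ + (k:ℝ)⁻¹ * (ε/4) := by ring
        _ < ε/2 + ε/2 := by
            have : (k:ℝ)⁻¹ * (ε/4) ≤ 1 * (ε/4) :=
              mul_le_mul_of_nonneg_right hkinv_le1 (by positivity)
            nlinarith
        _ = ε := by ring
lemma aux_all (m : ℕ) : SCC m := by
  induction m with
  | zero =>
    intro ε hε L hL
    exact aux_base ε hε L hL
  | succ m ih => exact aux_step m ih

/-- For every `n ≥ 1`, `ε > 0` and infinite `L ⊆ ℕ` there is an `(n, ε)`-basic special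
convex combination supported on a maximal `S_n`-subset `F` of `L`. -/
theorem exists_basic_scc_maximal (n : ℕ) (hn : 1 ≤ n) (ε : ℝ) (hε : 0 < ε)
    (L : Set ℕ) (hL : L.Infinite) :
    ∃ (F : Finset ℕ) (a : ℕ → ℝ),
      ↑F ⊆ L ∧
      F ∈ Schreier n ∧
      (∀ m ∈ L, fmax F < m → insert m F ∉ Schreier n) ∧
      (∀ i ∈ F, 0 ≤ a i ∧ a i ≤ 1) ∧
      (∑ i ∈ F, a i) = 1 ∧
      (∀ G ∈ Schreier (n - 1), (∑ i ∈ G ∩ F, a i) < ε) := by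
  obtain ⟨m, rfl⟩ : ∃ m, n = m + 1 := ⟨n - 1, by omega⟩
  obtain ⟨F, a, h1, _h2, h3, h4, h5, h6, h7⟩ := aux_all m ε hε L hL
  exact ⟨F, a, h1, h3, fun x _ hx => h4 x hx, h5, h6, by simpa using h7⟩

end
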